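/- Let P be an (L+1)×(L+1) stochastic matrix that is reversible with respect to a stationary distribution π (π_i P_{ij} = π_j P_{ji}), with π monotone non-increasing (π_0 ≥ π_1 ≥ ... ≥ π_L > 0), P tridiagonal (P_{ij} = 0 whenever |i-j| > 1), and with all nearest-neighbor transition probabilities P_{k,k+1} ≥ c for some c > 0. Then the conductance φ(P) = min_{B: 0<π(B)≤1/2} F(B)/π(B) satisfies φ(P) ≥ c/(2L), where F(B) = Σ_{i∈B, j∉B} π_i P_{ij}. -/

import Mathlib

open Finset in
/-- Conductance lower bound for a birth-death chain with monotone stationary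
distribution: if `P` is a stochastic matrix on `{0,…,L}`, reversible with respect to a
monotone non-increasing positive stationary distribution `π`, tridiagonal, and all
nearest-neighbor transition probabilities `P k (k+1)` are at least `c > 0`, then for
every nonempty set `B` with `π(B) ≤ 1/2` the flow satisfies
`F(B)/π(B) ≥ c/(2L)`, i.e. the conductance is at least `c/(2L)`. -/
theorem conductance_of_monotone_line_walk (L : ℕ)
    (P : Matrix (Fin (L + 1)) (Fin (L + 1)) ℝ)
    (π : Fin (L + 1) → ℝ)
    (hPnn : ∀ i j, 0 ≤ P i j) (hProw : ∀ i, ∑ j, P i j = 1)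
    (hπpos : ∀ i, 0 < π i) (hπsum : ∑ i, π i = 1)
    (hrev : ∀ i j, π i * P i j = π j * P j i)
    (hπmono : ∀ i j : Fin (L + 1), i ≤ j → π j ≤ π i)
    (htri : ∀ i j : Fin (L + 1), ((i : ℕ) + 1 < (j : ℕ) ∨ (j : ℕ) + 1 < (i : ℕ)) →
      P i j = 0)
    (c : ℝ) (hc : 0 < c)
    (hnb : ∀ k : Fin L, c ≤ P k.castSucc k.succ) :
    ∀ B : Finset (Fin (L + 1)), B.Nonempty → (∑ i ∈ B, π i) ≤ 1 / 2 →
      (c / (2 * L)) * (∑ i ∈ B, π i) ≤ ∑ i ∈ B, ∑ j ∈ Bᶜ, π i * P i j := by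
  intro B hB hBhalf
  have hterm : ∀ i j, 0 ≤ π i * P i j := fun i j => mul_nonneg (hπpos i).le (hPnn i j)
  have hflow_nonneg : 0 ≤ ∑ i ∈ B, ∑ j ∈ Bᶜ, π i * P i j :=
    Finset.sum_nonneg fun i _ => Finset.sum_nonneg fun j _ => hterm i j
  have hsingle : ∀ i₀ ∈ B, ∀ j₀ ∈ Bᶜ, π i₀ * P i₀ j₀ ≤ ∑ i ∈ B, ∑ j ∈ Bᶜ, π i * P i j := by
    intro i₀ hi j₀ hj
    calc π i₀ * P i₀ j₀ ≤ ∑ j ∈ Bᶜ, π i₀ * P i₀ j :=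
          Finset.single_le_sum (fun j _ => hterm i₀ j) hj
      _ ≤ ∑ i ∈ B, ∑ j ∈ Bᶜ, π i * P i j :=
          Finset.single_le_sum (fun i _ => Finset.sum_nonneg fun j _ => hterm i j) hi
  rcases Nat.eq_zero_or_pos L with hL0 | hLpos
  · subst hL0; simpa using hflow_nonneg
  have key : ∃ x : Fin (L+1), c * π x ≤ ∑ i ∈ B, ∑ j ∈ Bᶜ, π i * P i j ∧
      (∑ i ∈ B, π i) ≤ (L : ℝ) * π x := by
    have hcardL : ∀ S : Finset (Fin (L+1)), (0 : Fin (L+1)) ∉ S → S.card ≤ L := by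
      intro S h0
      calc S.card ≤ (Finset.univ.erase (0 : Fin (L+1))).card :=
            Finset.card_le_card (fun x hx =>
              Finset.mem_erase.mpr ⟨fun h => h0 (h ▸ hx), Finset.mem_univ x⟩)
        _ = L := by simp
    by_cases h0 : (0 : Fin (L+1)) ∈ B
    · -- boundary at the smallest element of Bᶜ
      have hcompl : Bᶜ.Nonempty := by
        by_contra h
        rw [Finset.not_nonempty_iff_eq_empty, Finset.compl_eq_empty_iff] at h
        subst h
        rw [hπsum] at hBhalf; linarith
      set b := Bᶜ.min' hcompl with hbdef
      have hbmem : b ∈ Bᶜ := Finset.min'_mem _ hcompl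
      have hb0 : (b : ℕ) ≠ 0 := by
        intro h
        exact (Finset.mem_compl.mp hbmem) ((Fin.ext h : b = 0) ▸ h0)
      have hbL := b.isLt
      set k : Fin L := ⟨(b : ℕ) - 1, by omega⟩ with hkdef
      have hksucc : k.succ = b := by
        apply Fin.ext
        simp [hkdef, Fin.val_succ]
        omega
      have hcs : k.castSucc ∈ B := by
        by_contra h
        have hle : b ≤ k.castSucc := Finset.min'_le _ _ (Finset.mem_compl.mpr h)
        rw [Fin.le_def] at hle
        simp [hkdef] at hle
        omega
      have h2 : c * π k.castSucc ≤ π k.castSucc * P k.castSucc k.succ := by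
        rw [mul_comm]
        exact mul_le_mul_of_nonneg_left (hnb k) (hπpos _).le
      have h3 : π k.castSucc * P k.castSucc k.succ ≤ ∑ i ∈ B, ∑ j ∈ Bᶜ, π i * P i j := by
        apply hsingle _ hcs
        rw [hksucc]; exact hbmem
      refine ⟨k.castSucc, le_trans h2 h3, ?_⟩
      have hsum : ∑ i ∈ B, π i + ∑ i ∈ Bᶜ, π i = 1 := by
        rw [Finset.sum_add_sum_compl]; exact hπsum
      have hBle : ∑ i ∈ B, π i ≤ ∑ i ∈ Bᶜ, π i := by linarith
      have hmono' : ∀ i ∈ Bᶜ, π i ≤ π k.castSucc := by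
        intro i hi
        apply hπmono
        have hle : b ≤ i := Finset.min'_le _ _ hi
        rw [Fin.le_def] at hle ⊢
        simp [hkdef]
        omega
      have hcard : Bᶜ.card ≤ L := hcardL _ (fun h => (Finset.mem_compl.mp h) h0)
      have hsc : ∑ i ∈ Bᶜ, π i ≤ (Bᶜ.card : ℝ) * π k.castSucc := by
        calc ∑ i ∈ Bᶜ, π i ≤ ∑ _i ∈ Bᶜ, π k.castSucc := Finset.sum_le_sum hmono'
          _ = (Bᶜ.card : ℝ) * π k.castSucc := by rw [Finset.sum_const, nsmul_eq_mul]
      have : (Bᶜ.card : ℝ) * π k.castSucc ≤ (L : ℝ) * π k.castSucc :=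
        mul_le_mul_of_nonneg_right (by exact_mod_cast hcard) (hπpos _).le
      linarith
    · -- boundary at the smallest element of B
      set a := B.min' hB with hadef
      have hamem : a ∈ B := Finset.min'_mem _ hB
      have ha0 : (a : ℕ) ≠ 0 := by
        intro h
        exact h0 ((Fin.ext h : a = 0) ▸ hamem)
      have haL := a.isLt
      set k : Fin L := ⟨(a : ℕ) - 1, by omega⟩ with hkdef
      have hksucc : k.succ = a := by
        apply Fin.ext
        simp [hkdef, Fin.val_succ]
        omega
      have hcs : k.castSucc ∈ Bᶜ := by
        rw [Finset.mem_compl]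
        intro h
        have hle : a ≤ k.castSucc := Finset.min'_le _ _ h
        rw [Fin.le_def] at hle
        simp [hkdef] at hle
        omega
      have hlecs : k.castSucc ≤ a := by
        rw [Fin.le_def]; simp [hkdef]
      have e : π k.castSucc * P k.castSucc k.succ = π a * P a k.castSucc := by
        rw [hksucc]; exact hrev _ _
      have h1 : c * π a ≤ c * π k.castSucc :=
        mul_le_mul_of_nonneg_left (hπmono _ _ hlecs) hc.le
      have h2 : c * π k.castSucc ≤ π k.castSucc * P k.castSucc k.succ := by
        rw [mul_comm]
        exact mul_le_mul_of_nonneg_left (hnb k) (hπpos _).le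
      have h3 : π a * P a k.castSucc ≤ ∑ i ∈ B, ∑ j ∈ Bᶜ, π i * P i j :=
        hsingle _ hamem _ hcs
      refine ⟨a, by linarith, ?_⟩
      have hmono' : ∀ i ∈ B, π i ≤ π a := fun i hi => hπmono _ _ (Finset.min'_le _ _ hi)
      have hcard : B.card ≤ L := hcardL _ h0
      have hsc : ∑ i ∈ B, π i ≤ (B.card : ℝ) * π a := by
        calc ∑ i ∈ B, π i ≤ ∑ _i ∈ B, π a := Finset.sum_le_sum hmono'
          _ = (B.card : ℝ) * π a := by rw [Finset.sum_const, nsmul_eq_mul]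
      have : (B.card : ℝ) * π a ≤ (L : ℝ) * π a :=
        mul_le_mul_of_nonneg_right (by exact_mod_cast hcard) (hπpos _).le
      linarith
  obtain ⟨x, hfl, hπB⟩ := key
  have hLne : (L : ℝ) ≠ 0 := by
    exact_mod_cast hLpos.ne'
  have e2 : c / (2 * (L : ℝ)) * ((L : ℝ) * π x) = c * π x / 2 := by
    field_simp
  have hcx : 0 ≤ c * π x := mul_nonneg hc.le (hπpos x).le
  calc c / (2 * (L : ℝ)) * (∑ i ∈ B, π i)
      ≤ c / (2 * (L : ℝ)) * ((L : ℝ) * π x) := by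
        apply mul_le_mul_of_nonneg_left hπB
        positivity
    _ = c * π x / 2 := e2
    _ ≤ c * π x := by linarith
    _ ≤ ∑ i ∈ B, ∑ j ∈ Bᶜ, π i * P i j := hfl
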